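/- The quadratic ψ₀(q) = 3q − 2q² satisfies ψ₀(q) ≥ h(q) for all q ∈ [0,1], where h(q) = 1 for q > 1/2, h(1/2) = 1/2, and h(q) = 0 for q < 1/2. Consequently, for every probability measure π on [0,1] with first moment μ and second moment ν, V_∞(π) = π((1/2,1]) + (1/2)π({1/2}) ≤ min{1, 3μ − 2ν}. Moreover, for every feasible (μ,ν) with μ > 1/2 or ν > μ/2, this bound is sharp: min{1, 3μ − 2ν} is the supremum of V_∞ over all probability measures on [0,1] with these two moments. -/

import Mathlib

open MeasureTheory ENNReal

/-- The threshold function: `h(q) = 1` for `q > 1/2`, `h(1/2) = 1/2`, `h(q) = 0` for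
`q < 1/2`. -/
noncomputable def hthr (q : ℝ) : ℝ := if 1 / 2 < q then 1 else if q = 1 / 2 then 1 / 2 else 0

/-- The infinite-vote endpoint `V_∞(π) = π((1/2, 1]) + (1/2) π({1/2})`. -/
noncomputable def Vinf (π : Measure ℝ) : ℝ :=
  (π (Set.Ioc (1 / 2 : ℝ) 1)).toReal + (1 / 2) * (π {(1 / 2 : ℝ)}).toReal

/-- The two-moment class `M(μ,ν)`: probability measures on `[0,1]` with first moment `μ`
and second moment `ν`. -/
def momentClass (μ ν : ℝ) : Set (Measure ℝ) :=
  {π | IsProbabilityMeasure π ∧ π ((Set.Icc (0 : ℝ) 1)ᶜ) = 0 ∧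
    (∫ q, q ∂π) = μ ∧ (∫ q, q ^ 2 ∂π) = ν}

lemma integrable_smul_dirac (f : ℝ → ℝ) (hf : Measurable f) (p : ℝ) (a : ℝ) :
    Integrable f (ENNReal.ofReal p • Measure.dirac a) := by
  refine ⟨hf.aestronglyMeasurable, ?_⟩
  rw [hasFiniteIntegral_def, lintegral_smul_measure, lintegral_dirac' _ hf.enorm]
  exact ENNReal.mul_lt_top ENNReal.ofReal_lt_top enorm_lt_top

noncomputable def triMeas (p q r t : ℝ) : Measure ℝ :=
  ENNReal.ofReal p • Measure.dirac 0 + ENNReal.ofReal q • Measure.dirac t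
    + ENNReal.ofReal r • Measure.dirac 1

lemma triMeas_integral (f : ℝ → ℝ) (hf : Measurable f) (p q r t : ℝ)
    (hp : 0 ≤ p) (hq : 0 ≤ q) (hr : 0 ≤ r) :
    ∫ x, f x ∂(triMeas p q r t) = p * f 0 + q * f t + r * f 1 := by
  rw [triMeas, integral_add_measure ((integrable_smul_dirac f hf p 0).add_measure
      (integrable_smul_dirac f hf q t)) (integrable_smul_dirac f hf r 1),
    integral_add_measure (integrable_smul_dirac f hf p 0) (integrable_smul_dirac f hf q t)]
  simp [integral_smul_measure, ENNReal.toReal_ofReal, hp, hq, hr, smul_eq_mul]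

lemma triMeas_apply (p q r t : ℝ) (s : Set ℝ) (hs : MeasurableSet s) :
    triMeas p q r t s = ENNReal.ofReal p * s.indicator 1 0
      + ENNReal.ofReal q * s.indicator 1 t + ENNReal.ofReal r * s.indicator 1 1 := by
  simp [triMeas, Measure.add_apply, Measure.dirac_apply' _ hs]

lemma triMeas_mem (p q r t : ℝ) (hp : 0 ≤ p) (hq : 0 ≤ q) (hr : 0 ≤ r)
    (hsum : p + q + r = 1) (ht0 : 1 / 2 < t) (ht1 : t ≤ 1) :
    triMeas p q r t ∈ momentClass (q * t + r) (q * t ^ 2 + r) ∧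
      Vinf (triMeas p q r t) = q + r := by
  have h0t : (0:ℝ) ≤ t := le_of_lt (lt_trans (by norm_num) ht0)
  refine ⟨⟨⟨?_⟩, ?_, ?_, ?_⟩, ?_⟩
  · rw [triMeas_apply _ _ _ _ _ MeasurableSet.univ]
    simp only [Set.indicator_univ, Pi.one_apply, mul_one]
    rw [← ENNReal.ofReal_add hp hq, ← ENNReal.ofReal_add (by linarith) hr, hsum]
    norm_num
  · rw [triMeas_apply _ _ _ _ _ measurableSet_Icc.compl]
    have h0 : (0:ℝ) ∈ Set.Icc (0:ℝ) 1 := by norm_num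
    have ht : t ∈ Set.Icc (0:ℝ) 1 := ⟨h0t, ht1⟩
    have h1 : (1:ℝ) ∈ Set.Icc (0:ℝ) 1 := by norm_num
    rw [Set.indicator_of_notMem (by simpa using h0), Set.indicator_of_notMem (by simpa using ht),
      Set.indicator_of_notMem (by simpa using h1)]
    simp
  · have := triMeas_integral (fun x => x) measurable_id p q r t hp hq hr
    simpa using this
  · have := triMeas_integral (fun x => x ^ 2) (measurable_id.pow_const 2) p q r t hp hq hr
    simpa using this
  · have hIoc : t ∈ Set.Ioc (1/2 : ℝ) 1 := ⟨ht0, ht1⟩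
    have h1Ioc : (1:ℝ) ∈ Set.Ioc (1/2 : ℝ) 1 := by norm_num
    have h0Ioc : (0:ℝ) ∉ Set.Ioc (1/2 : ℝ) 1 := by norm_num
    have htne : t ∉ ({(1/2 : ℝ)} : Set ℝ) := by simp; linarith
    rw [Vinf, triMeas_apply _ _ _ _ _ measurableSet_Ioc,
      triMeas_apply _ _ _ _ _ (measurableSet_singleton _)]
    rw [Set.indicator_of_mem hIoc, Set.indicator_of_mem h1Ioc, Set.indicator_of_notMem h0Ioc,
      Set.indicator_of_notMem htne]
    have : (0:ℝ) ∉ ({(1/2:ℝ)} : Set ℝ) := by norm_num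
    rw [Set.indicator_of_notMem this]
    have : (1:ℝ) ∉ ({(1/2:ℝ)} : Set ℝ) := by norm_num
    rw [Set.indicator_of_notMem this]
    simp [← ENNReal.ofReal_add hq hr, ENNReal.toReal_ofReal (by linarith : (0:ℝ) ≤ q + r)]

lemma hthr_le_psi : ∀ q ∈ Set.Icc (0 : ℝ) 1, hthr q ≤ 3 * q - 2 * q ^ 2 := by
  intro q hq
  obtain ⟨h0, h1⟩ := hq
  unfold hthr
  split_ifs with hgt heq
  · nlinarith
  · nlinarith [heq ▸ h0]
  · nlinarith

lemma vinf_le (μ ν : ℝ) (π : Measure ℝ) (hπ : π ∈ momentClass μ ν) :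
    Vinf π ≤ min 1 (3 * μ - 2 * ν) := by
  obtain ⟨hprob, hnull, hm1, hm2⟩ := hπ
  have hae : ∀ᵐ x ∂π, x ∈ Set.Icc (0:ℝ) 1 := by
    rw [ae_iff]
    exact hnull
  set A := Set.Ioc (1/2 : ℝ) 1 with hA
  set B := ({(1/2 : ℝ)} : Set ℝ) with hB
  have hAfin : π A ≠ ⊤ := measure_ne_top π A
  have hBfin : π B ≠ ⊤ := measure_ne_top π B
  refine le_min ?_ ?_
  · have hdisj : Disjoint A B := by
      rw [Set.disjoint_right]
      intro x hx
      simp only [hB, Set.mem_singleton_iff] at hx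
      subst hx
      simp [hA]
    have hu : π A + π B = π (A ∪ B) := (measure_union hdisj (measurableSet_singleton _)).symm
    have hle : π (A ∪ B) ≤ 1 := prob_le_one
    have : (π A).toReal + (π B).toReal ≤ 1 := by
      rw [← ENNReal.toReal_add hAfin hBfin, hu]
      exact ENNReal.toReal_le_of_le_ofReal zero_le_one (by simpa using hle)
    have hBnn : (0:ℝ) ≤ (π B).toReal := ENNReal.toReal_nonneg
    unfold Vinf
    linarith
  · -- integral comparison
    set f : ℝ → ℝ := A.indicator (fun _ => (1:ℝ)) + B.indicator (fun _ => (1/2 : ℝ)) with hf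
    have hintA : Integrable (A.indicator (fun _ => (1:ℝ))) π :=
      (integrable_const (1:ℝ)).indicator measurableSet_Ioc
    have hintB : Integrable (B.indicator (fun _ => (1/2:ℝ))) π :=
      (integrable_const (1/2:ℝ)).indicator (measurableSet_singleton _)
    have hintf : Integrable f π := hintA.add hintB
    have hX : Integrable (fun x : ℝ => x) π := by
      refine Integrable.mono' (integrable_const (1:ℝ)) measurable_id.aestronglyMeasurable ?_
      filter_upwards [hae] with x hx
      rw [Real.norm_eq_abs, abs_le]
      exact ⟨by linarith [hx.1], hx.2⟩
    have hX2 : Integrable (fun x : ℝ => x ^ 2) π := by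
      refine Integrable.mono' (integrable_const (1:ℝ))
        (measurable_id.pow_const 2).aestronglyMeasurable ?_
      filter_upwards [hae] with x hx
      rw [Real.norm_eq_abs, abs_le]
      constructor <;> nlinarith [hx.1, hx.2]
    have hintg : Integrable (fun x : ℝ => 3 * x - 2 * x ^ 2) π :=
      (hX.const_mul 3).sub (hX2.const_mul 2)
    have hfg : ∀ᵐ x ∂π, f x ≤ 3 * x - 2 * x ^ 2 := by
      filter_upwards [hae] with x hx
      refine le_trans ?_ (hthr_le_psi x hx)
      simp only [hf, Pi.add_apply]
      unfold hthr
      by_cases hgt : 1/2 < x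
      · rw [if_pos hgt]
        have hxB : x ∉ B := by simp only [hB, Set.mem_singleton_iff]; intro h; linarith [h ▸ hgt]
        rw [Set.indicator_of_notMem hxB]
        by_cases hxA : x ∈ A
        · rw [Set.indicator_of_mem hxA]; norm_num
        · rw [Set.indicator_of_notMem hxA]; norm_num
      · rw [if_neg hgt]
        have hxA : x ∉ A := fun h => hgt h.1
        rw [Set.indicator_of_notMem hxA]
        by_cases heq : x = 1/2
        · rw [if_pos heq, Set.indicator_of_mem (by simp [hB, heq])]; norm_num
        · rw [if_neg heq, Set.indicator_of_notMem (by simp only [hB, Set.mem_singleton_iff]; exact heq)]; norm_num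
    have hle := integral_mono_ae hintf hintg hfg
    have hfeq : ∫ x, f x ∂π = Vinf π := by
      rw [hf]
      simp only [Pi.add_apply]
      rw [integral_add hintA hintB, integral_indicator_const _ measurableSet_Ioc,
        integral_indicator_const _ (measurableSet_singleton _)]
      unfold Vinf
      rw [smul_eq_mul, smul_eq_mul]
      simp only [measureReal_def]
      ring
    have hgeq : ∫ x, (3 * x - 2 * x ^ 2) ∂π = 3 * μ - 2 * ν := by
      rw [integral_sub (hX.const_mul 3) (hX2.const_mul 2), integral_const_mul, integral_const_mul,
        hm1, hm2]
    rw [hfeq, hgeq] at hle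
    exact hle

lemma sharp (μ ν : ℝ) (h0 : 0 ≤ μ) (h1 : μ ≤ 1) (h2 : μ ^ 2 ≤ ν) (h3 : ν ≤ μ)
    (h4 : 1 / 2 < μ ∨ μ / 2 < ν) :
    IsLUB {x | ∃ π ∈ momentClass μ ν, Vinf π = x} (min 1 (3 * μ - 2 * ν)) := by
  have hν2 : μ / 2 < ν := by
    rcases h4 with h | h
    · nlinarith
    · exact h
  have hμpos : 0 < μ := by linarith
  have hub : (min 1 (3 * μ - 2 * ν)) ∈ upperBounds {x | ∃ π ∈ momentClass μ ν, Vinf π = x} := by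
    rintro x ⟨π, hπ, rfl⟩
    exact vinf_le μ ν π hπ
  by_cases hνμ : ν = μ
  · -- attained by (1-μ)δ₀ + μδ₁
    have hmin : min 1 (3 * μ - 2 * ν) = μ := by
      rw [hνμ]
      rw [show 3 * μ - 2 * μ = μ by ring]
      exact min_eq_right h1
    obtain ⟨hm, hV⟩ := triMeas_mem (1 - μ) 0 μ (3/4) (by linarith) le_rfl h0
      (by ring) (by norm_num) (by norm_num)
    norm_num at hm hV
    exact IsGreatest.isLUB ⟨⟨triMeas (1 - μ) 0 μ (3/4), by rw [hνμ]; exact hm,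
      hV.trans hmin.symm⟩, hub⟩
  · have hνlt : ν < μ := lt_of_le_of_ne h3 hνμ
    have hμlt1 : μ < 1 := by
      rcases lt_or_eq_of_le h1 with h | h
      · exact h
      · exfalso; nlinarith
    have h1μ : 0 < 1 - μ := by linarith
    by_cases hcase : 3 * μ - 2 * ν ≤ 1
    · -- sup = 3μ - 2ν, approached
      have hmin : min 1 (3 * μ - 2 * ν) = 3 * μ - 2 * ν := min_eq_right hcase
      rw [hmin] at hub ⊢
      refine ⟨hub, ?_⟩
      intro b hb
      have hhalf : (1/2 : ℝ) < ν / μ := by rw [lt_div_iff₀ hμpos]; linarith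
      have hS : ∀ t : ℝ, 1/2 < t → t ≤ ν / μ →
          (μ + (μ - ν)/t) ∈ {x | ∃ π ∈ momentClass μ ν, Vinf π = x} := by
        intro t ht0 htν
        have htpos : (0:ℝ) < t := by linarith
        have ht1 : t < 1 := lt_of_le_of_lt htν (by rw [div_lt_one hμpos]; exact hνlt)
        have h1t : (0:ℝ) < 1 - t := by linarith
        have hμt : μ * t ≤ ν := by
          have := (le_div_iff₀ hμpos).1 htν
          linarith
        have hq : 0 ≤ (μ - ν)/(t*(1-t)) := div_nonneg (by linarith) (by positivity)
        have hr : 0 ≤ (ν - μ*t)/(1-t) := div_nonneg (by linarith) h1t.le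
        have hqr : (μ - ν)/(t*(1-t)) + (ν - μ*t)/(1-t) = μ + (μ - ν)/t := by
          field_simp
          ring
        have hp : 0 ≤ 1 - (μ - ν)/(t*(1-t)) - (ν - μ*t)/(1-t) := by
          have hle : (μ - ν)/t ≤ 1 - μ := by
            rw [div_le_iff₀ htpos]
            nlinarith
          have : (μ - ν)/(t*(1-t)) + (ν - μ*t)/(1-t) ≤ 1 := by rw [hqr]; linarith
          linarith
        obtain ⟨hm, hV⟩ := triMeas_mem (1 - (μ - ν)/(t*(1-t)) - (ν - μ*t)/(1-t))
          ((μ - ν)/(t*(1-t))) ((ν - μ*t)/(1-t)) t hp hq hr (by ring) ht0 ht1.le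
        have hm1' : (μ - ν)/(t*(1-t)) * t + (ν - μ*t)/(1-t) = μ := by
          field_simp
          ring
        have hm2' : (μ - ν)/(t*(1-t)) * t ^ 2 + (ν - μ*t)/(1-t) = ν := by
          field_simp
          ring
        rw [hm1', hm2'] at hm
        exact ⟨_, hm, by rw [hV, hqr]⟩
      have hbt : ∀ t ∈ Set.Ioc (1/2 : ℝ) (ν/μ), μ + (μ - ν)/t ≤ b :=
        fun t ht => hb (hS t ht.1 ht.2)
      have hcont : ContinuousAt (fun t : ℝ => μ + (μ - ν)/t) (1/2) :=
        continuousAt_const.add (continuousAt_const.div continuousAt_id (by norm_num))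
      have hval : μ + (μ - ν)/(1/2 : ℝ) = 3 * μ - 2 * ν := by ring
      have htend : Filter.Tendsto (fun t : ℝ => μ + (μ - ν)/t)
          (nhdsWithin (1/2) (Set.Ioi (1/2))) (nhds (3 * μ - 2 * ν)) := by
        rw [← hval]
        exact (hcont.tendsto).mono_left nhdsWithin_le_nhds
      exact le_of_tendsto htend (Filter.eventually_of_mem
        (Ioc_mem_nhdsGT_of_mem ⟨le_refl _, hhalf⟩) hbt)
    · -- sup = 1, attained
      push_neg at hcase
      have hmin : min 1 (3 * μ - 2 * ν) = 1 := min_eq_left hcase.le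
      have hd : 0 < 1 - 2*μ + ν := by nlinarith
      have ht0 : (1/2 : ℝ) < (μ - ν)/(1 - μ) := by rw [lt_div_iff₀ h1μ]; linarith
      have ht1 : (μ - ν)/(1 - μ) ≤ 1 := by rw [div_le_one h1μ]; nlinarith
      have hq : 0 ≤ (1 - μ)^2/(1 - 2*μ + ν) := by positivity
      have hr : 0 ≤ (ν - μ^2)/(1 - 2*μ + ν) := div_nonneg (by linarith) hd.le
      have hsum : 0 + (1 - μ)^2/(1 - 2*μ + ν) + (ν - μ^2)/(1 - 2*μ + ν) = 1 := by
        rw [zero_add, ← add_div, div_eq_one_iff_eq hd.ne']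
        ring
      obtain ⟨hm, hV⟩ := triMeas_mem 0 ((1 - μ)^2/(1 - 2*μ + ν)) ((ν - μ^2)/(1 - 2*μ + ν))
        ((μ - ν)/(1 - μ)) le_rfl hq hr hsum ht0 ht1
      have hm1' : (1 - μ)^2/(1 - 2*μ + ν) * ((μ - ν)/(1 - μ)) + (ν - μ^2)/(1 - 2*μ + ν) = μ := by
        rw [div_mul_div_comm, div_add_div _ _ (mul_ne_zero hd.ne' h1μ.ne') hd.ne',
          div_eq_iff (mul_ne_zero (mul_ne_zero hd.ne' h1μ.ne') hd.ne')]
        ring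
      have hm2' : (1 - μ)^2/(1 - 2*μ + ν) * ((μ - ν)/(1 - μ)) ^ 2
          + (ν - μ^2)/(1 - 2*μ + ν) = ν := by
        rw [div_pow, div_mul_div_comm, div_add_div _ _ (mul_ne_zero hd.ne' (pow_ne_zero 2 h1μ.ne')) hd.ne',
          div_eq_iff (mul_ne_zero (mul_ne_zero hd.ne' (pow_ne_zero 2 h1μ.ne')) hd.ne')]
        ring
      rw [hm1', hm2'] at hm
      have hV1 : (1 - μ)^2/(1 - 2*μ + ν) + (ν - μ^2)/(1 - 2*μ + ν) = 1 := by
        rw [← add_div, div_eq_one_iff_eq hd.ne']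
        ring
      rw [hmin] at hub ⊢
      exact IsGreatest.isLUB ⟨⟨_, hm, by rw [hV, hV1]⟩, hub⟩

/-- **Linear endpoint branch.** The quadratic `ψ₀(q) = 3q − 2q²` dominates the threshold
function `h` on `[0,1]`.  Consequently every probability measure `π` on `[0,1]` with first
moment `μ` and second moment `ν` has `V_∞(π) ≤ min{1, 3μ − 2ν}`; and for every feasible
`(μ,ν)` with `μ > 1/2` or `ν > μ/2`, this bound is sharp: `min{1, 3μ − 2ν}` is the
supremum of `V_∞` over the two-moment class `M(μ,ν)`. -/
theorem endpoint_linear_branch :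
    (∀ q ∈ Set.Icc (0 : ℝ) 1, hthr q ≤ 3 * q - 2 * q ^ 2) ∧
    (∀ (μ ν : ℝ), ∀ π ∈ momentClass μ ν, Vinf π ≤ min 1 (3 * μ - 2 * ν)) ∧
    (∀ μ ν : ℝ, 0 ≤ μ → μ ≤ 1 → μ ^ 2 ≤ ν → ν ≤ μ → (1 / 2 < μ ∨ μ / 2 < ν) →
      IsLUB {x | ∃ π ∈ momentClass μ ν, Vinf π = x} (min 1 (3 * μ - 2 * ν))) :=
  ⟨hthr_le_psi, fun μ ν π hπ => vinf_le μ ν π hπ, sharp⟩
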